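/- Let F = e^φ[cos ψ U + sin ψ *U] be a regular 2-form with canonical elements (U, φ, ψ), and ℱ = (1/√2)(F − i*F) = e^{φ + iψ} 𝒰 the associated self-dual form. Then the source-free Maxwell equations δF = 0, δ*F = 0 (equivalently δℱ = 0) hold if and only if dφ = Φ(U) := i(δU)U − i(δ*U)*U and dψ = Ψ(U) := −i(δU)*U − i(δ*U)U. -/
import Mathlib

open Matrix in
private lemma triple4 (A B C : Matrix (Fin 4) (Fin 4) ℝ) (a b : Fin 4) :
    (∑ m, ∑ n, A a m * B m n * C n b) = (A * (B * C)) a b := by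
  simp only [Matrix.mul_apply, Finset.mul_sum]
  exact Finset.sum_congr rfl fun m _ => Finset.sum_congr rfl fun n _ => by ring

open Matrix in
private lemma pair4 (A : Matrix (Fin 4) (Fin 4) ℝ) (v : Fin 4 → ℝ) (B : Matrix (Fin 4) (Fin 4) ℝ) (b : Fin 4) :
    (∑ e, ∑ e', A e e' * v e * B e' b) = (v ᵥ* (A * B)) b := by
  simp only [Matrix.vecMul, dotProduct, Matrix.mul_apply, Finset.mul_sum]
  exact Finset.sum_congr rfl fun e _ => Finset.sum_congr rfl fun e' _ => by ring

private lemma rotAux (c s A B : ℝ) (hcs : s^2 + c^2 = 1)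
    (h1 : c*A + s*B = 0) (h2 : c*B - s*A = 0) : A = 0 ∧ B = 0 :=
  ⟨by linear_combination c*h1 - s*h2 - A*hcs, by linear_combination s*h1 + c*h2 - B*hcs⟩

open Matrix in
private lemma step2 (Gi Um sUm Gm : Matrix (Fin 4) (Fin 4) ℝ)
    (vφ vψ a c : Fin 4 → ℝ)
    (hA : Um * (Gi * Um) - sUm * (Gi * sUm) = Gm)
    (hB : Um * (Gi * sUm) = 0)
    (hC : sUm * (Gi * Um) = 0)
    (hGm : Gm * Gi = 1) :
    ((∀ b, a b = (vφ ᵥ* (Gi * Um)) b + (vψ ᵥ* (Gi * sUm)) b) ∧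
     (∀ b, c b = (vφ ᵥ* (Gi * sUm)) b - (vψ ᵥ* (Gi * Um)) b)) ↔
    ((∀ b, vφ b = (a ᵥ* (Gi * Um)) b - (c ᵥ* (Gi * sUm)) b) ∧
     (∀ b, vψ b = -((a ᵥ* (Gi * sUm)) b) - (c ᵥ* (Gi * Um)) b)) := by
  have hGiG : Gi * Gm = 1 := mul_eq_one_comm.mp hGm
  have hP2 : (Gi*Um) * (Gi*Um) = 1 + (Gi*sUm) * (Gi*sUm) := by
    have h := congrArg (fun X => Gi * X) hA
    simp only [Matrix.mul_sub] at h
    rw [hGiG] at h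
    calc (Gi*Um)*(Gi*Um) = Gi*(Um*(Gi*Um)) := by rw [mul_assoc]
      _ = 1 + Gi*(sUm*(Gi*sUm)) := eq_add_of_sub_eq h
      _ = 1 + (Gi*sUm)*(Gi*sUm) := by rw [mul_assoc]
  have hPQ : (Gi*Um)*(Gi*sUm) = 0 := by rw [mul_assoc, hB, mul_zero]
  have hQP : (Gi*sUm)*(Gi*Um) = 0 := by rw [mul_assoc, hC, mul_zero]
  constructor
  · rintro ⟨h1, h2⟩
    have h1' : a = vφ ᵥ* (Gi*Um) + vψ ᵥ* (Gi*sUm) := funext fun b => h1 b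
    have h2' : c = vφ ᵥ* (Gi*sUm) - vψ ᵥ* (Gi*Um) := funext fun b => h2 b
    constructor <;> intro b <;>
      rw [h1', h2'] <;>
      simp only [Matrix.add_vecMul, Matrix.sub_vecMul, Matrix.neg_vecMul,
        Matrix.vecMul_vecMul, hP2, hPQ, hQP, Matrix.vecMul_zero,
        Matrix.vecMul_add, Matrix.vecMul_one] <;>
      simp only [Pi.add_apply, Pi.sub_apply, Pi.neg_apply, Pi.zero_apply] <;> ring
  · rintro ⟨h1, h2⟩
    have h1' : vφ = a ᵥ* (Gi*Um) - c ᵥ* (Gi*sUm) := funext fun b => h1 b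
    have h2' : vψ = -(a ᵥ* (Gi*sUm)) - c ᵥ* (Gi*Um) := funext fun b => h2 b
    constructor <;> intro b <;>
      rw [h1', h2'] <;>
      simp only [Matrix.add_vecMul, Matrix.sub_vecMul, Matrix.neg_vecMul,
        Matrix.vecMul_vecMul, hP2, hPQ, hQP, Matrix.vecMul_zero,
        Matrix.vecMul_add, Matrix.vecMul_one] <;>
      simp only [Pi.add_apply, Pi.sub_apply, Pi.neg_apply, Pi.zero_apply] <;> ring


/-- index model over an abstract spacetime `M`: for a regular
2-form `F = e^φ[cos ψ U + sin ψ *U]` with canonical elements `(U, φ, ψ)`, the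
source-free Maxwell equations `δF = 0`, `δ*F = 0` hold if and only if
`dφ = Φ(U) := i(δU)U − i(δ*U)*U` and `dψ = Ψ(U) := −i(δU)*U − i(δ*U)U`.
Covariant derivatives (`DU x e a b = ∇_e U_{ab}`, etc.) are given as data
subject to the Leibniz rule for `F` and `*F`; divergences are
`(δU)_b = −∇^a U_{ab}`. -/
theorem stmt_8 (M : Type*)
    (g ginv U sU F sF : M → Fin 4 → Fin 4 → ℝ)
    (φ ψ : M → ℝ) (dφ dψ : M → Fin 4 → ℝ)
    (DU DsU DF DsF : M → Fin 4 → Fin 4 → Fin 4 → ℝ)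
    (δU δsU δF δsF : M → Fin 4 → ℝ)
    (hginv : ∀ x a b, ∑ e, g x a e * ginv x e b = if a = b then (1 : ℝ) else 0)
    (hgsym : ∀ x a b, g x a b = g x b a)
    (hginvsym : ∀ x a b, ginv x a b = ginv x b a)
    (hUanti : ∀ x a b, U x a b = -U x b a)
    (hsUanti : ∀ x a b, sU x a b = -sU x b a)
    -- unitarity: U² − (*U)² = g, U × *U = 0, (U,U) = −1, (*U,*U) = 1
    (hU2 : ∀ x a b, (∑ m, ∑ n, U x a m * ginv x m n * U x n b)
        - (∑ m, ∑ n, sU x a m * ginv x m n * sU x n b) = g x a b)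
    (hUsU : ∀ x a b, (∑ m, ∑ n, U x a m * ginv x m n * sU x n b) = 0)
    (hUU : ∀ x, (∑ a, ∑ b, ∑ a', ∑ b',
      ginv x a a' * ginv x b b' * U x a b * U x a' b') = -2)
    (hsUsU : ∀ x, (∑ a, ∑ b, ∑ a', ∑ b',
      ginv x a a' * ginv x b b' * sU x a b * sU x a' b') = 2)
    -- F = e^φ(cos ψ U + sin ψ *U) and its Hodge dual
    (hF : ∀ x a b, F x a b = Real.exp (φ x) *
      (Real.cos (ψ x) * U x a b + Real.sin (ψ x) * sU x a b))
    (hsF : ∀ x a b, sF x a b = Real.exp (φ x) *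
      (Real.cos (ψ x) * sU x a b - Real.sin (ψ x) * U x a b))
    -- Leibniz rule for the covariant derivatives of F and *F
    (hDF : ∀ x e a b, DF x e a b = Real.exp (φ x) *
      ((dφ x e * Real.cos (ψ x) - dψ x e * Real.sin (ψ x)) * U x a b
        + Real.cos (ψ x) * DU x e a b
        + (dφ x e * Real.sin (ψ x) + dψ x e * Real.cos (ψ x)) * sU x a b
        + Real.sin (ψ x) * DsU x e a b))
    (hDsF : ∀ x e a b, DsF x e a b = Real.exp (φ x) *
      ((dφ x e * Real.cos (ψ x) - dψ x e * Real.sin (ψ x)) * sU x a b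
        + Real.cos (ψ x) * DsU x e a b
        - (dφ x e * Real.sin (ψ x) + dψ x e * Real.cos (ψ x)) * U x a b
        - Real.sin (ψ x) * DU x e a b))
    -- divergences δ = −Tr∇
    (hδU : ∀ x b, δU x b = -∑ e, ∑ e', ginv x e e' * DU x e e' b)
    (hδsU : ∀ x b, δsU x b = -∑ e, ∑ e', ginv x e e' * DsU x e e' b)
    (hδF : ∀ x b, δF x b = -∑ e, ∑ e', ginv x e e' * DF x e e' b)
    (hδsF : ∀ x b, δsF x b = -∑ e, ∑ e', ginv x e e' * DsF x e e' b) :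
    ((∀ x b, δF x b = 0) ∧ (∀ x b, δsF x b = 0)) ↔
      ((∀ x b, dφ x b =
          (∑ a, ∑ a', ginv x a a' * δU x a * U x a' b)
            - (∑ a, ∑ a', ginv x a a' * δsU x a * sU x a' b)) ∧
       (∀ x b, dψ x b =
          -(∑ a, ∑ a', ginv x a a' * δU x a * sU x a' b)
            - (∑ a, ∑ a', ginv x a a' * δsU x a * U x a' b))) := by
  classical
  -- pointwise form of the divergence of F
  have key1 : ∀ x b, δF x b = Real.exp (φ x) *
      (Real.cos (ψ x) * (δU x b - (∑ e, ∑ e', ginv x e e' * dφ x e * U x e' b)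
          - (∑ e, ∑ e', ginv x e e' * dψ x e * sU x e' b))
       + Real.sin (ψ x) * (δsU x b - (∑ e, ∑ e', ginv x e e' * dφ x e * sU x e' b)
          + (∑ e, ∑ e', ginv x e e' * dψ x e * U x e' b))) := by
    intro x b
    rw [hδF x b, hδU x b, hδsU x b]
    simp only [hDF, Fin.sum_univ_four]
    ring
  have key2 : ∀ x b, δsF x b = Real.exp (φ x) *
      (Real.cos (ψ x) * (δsU x b - (∑ e, ∑ e', ginv x e e' * dφ x e * sU x e' b)
          + (∑ e, ∑ e', ginv x e e' * dψ x e * U x e' b))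
       - Real.sin (ψ x) * (δU x b - (∑ e, ∑ e', ginv x e e' * dφ x e * U x e' b)
          - (∑ e, ∑ e', ginv x e e' * dψ x e * sU x e' b))) := by
    intro x b
    rw [hδsF x b, hδU x b, hδsU x b]
    simp only [hDsF, Fin.sum_univ_four]
    ring
  -- step 1: Maxwell ↔ contracted equations, at each point
  have maxeq : ∀ x, ((∀ b, δF x b = 0) ∧ (∀ b, δsF x b = 0)) ↔
      ((∀ b, δU x b = (∑ e, ∑ e', ginv x e e' * dφ x e * U x e' b)
          + (∑ e, ∑ e', ginv x e e' * dψ x e * sU x e' b)) ∧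
       (∀ b, δsU x b = (∑ e, ∑ e', ginv x e e' * dφ x e * sU x e' b)
          - (∑ e, ∑ e', ginv x e e' * dψ x e * U x e' b))) := by
    intro x
    constructor
    · rintro ⟨f0, sf0⟩
      have h : ∀ b, (δU x b - (∑ e, ∑ e', ginv x e e' * dφ x e * U x e' b)
          - (∑ e, ∑ e', ginv x e e' * dψ x e * sU x e' b)) = 0 ∧
          (δsU x b - (∑ e, ∑ e', ginv x e e' * dφ x e * sU x e' b)
          + (∑ e, ∑ e', ginv x e e' * dψ x e * U x e' b)) = 0 := by
        intro b
        have k1 := key1 x b; rw [f0 b] at k1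
        have k2 := key2 x b; rw [sf0 b] at k2
        have e1 := (mul_eq_zero.mp k1.symm).resolve_left (Real.exp_ne_zero _)
        have e2 := (mul_eq_zero.mp k2.symm).resolve_left (Real.exp_ne_zero _)
        exact rotAux _ _ _ _ (Real.sin_sq_add_cos_sq (ψ x)) e1 (by linear_combination e2)
      constructor <;> intro b
      · linear_combination (h b).1
      · linear_combination (h b).2
    · rintro ⟨h1, h2⟩
      constructor <;> intro b
      · rw [key1 x b, h1 b, h2 b]; ring
      · rw [key2 x b, h1 b, h2 b]; ring
  -- step 2: invert the contraction using unitarity, at each point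
  have main : ∀ x, ((∀ b, δU x b = (∑ e, ∑ e', ginv x e e' * dφ x e * U x e' b)
          + (∑ e, ∑ e', ginv x e e' * dψ x e * sU x e' b)) ∧
       (∀ b, δsU x b = (∑ e, ∑ e', ginv x e e' * dφ x e * sU x e' b)
          - (∑ e, ∑ e', ginv x e e' * dψ x e * U x e' b))) ↔
      ((∀ b, dφ x b =
          (∑ a, ∑ a', ginv x a a' * δU x a * U x a' b)
            - (∑ a, ∑ a', ginv x a a' * δsU x a * sU x a' b)) ∧
       (∀ b, dψ x b =
          -(∑ a, ∑ a', ginv x a a' * δU x a * sU x a' b)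
            - (∑ a, ∑ a', ginv x a a' * δsU x a * U x a' b))) := by
    intro x
    have hC0 : ∀ a b, (∑ m, ∑ n, sU x a m * ginv x m n * U x n b) = 0 := by
      intro a b
      calc (∑ m, ∑ n, sU x a m * ginv x m n * U x n b)
          = ∑ m, ∑ n, U x b n * ginv x n m * sU x m a :=
            Finset.sum_congr rfl fun m _ => Finset.sum_congr rfl fun n _ => by
              rw [hsUanti x a m, hUanti x n b, hginvsym x m n]; ring
        _ = ∑ n, ∑ m, U x b n * ginv x n m * sU x m a := Finset.sum_comm
        _ = 0 := hUsU x b a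
    have hA : Matrix.of (U x) * (Matrix.of (ginv x) * Matrix.of (U x))
        - Matrix.of (sU x) * (Matrix.of (ginv x) * Matrix.of (sU x)) = Matrix.of (g x) := by
      ext a b
      rw [Matrix.sub_apply, ← triple4, ← triple4]
      exact hU2 x a b
    have hB : Matrix.of (U x) * (Matrix.of (ginv x) * Matrix.of (sU x)) = 0 := by
      ext a b
      rw [Matrix.zero_apply, ← triple4]
      exact hUsU x a b
    have hC : Matrix.of (sU x) * (Matrix.of (ginv x) * Matrix.of (U x)) = 0 := by
      ext a b
      rw [Matrix.zero_apply, ← triple4]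
      exact hC0 a b
    have hGm : Matrix.of (g x) * Matrix.of (ginv x) = 1 := by
      ext a b
      rw [Matrix.mul_apply, Matrix.one_apply]
      exact hginv x a b
    have S := step2 (Matrix.of (ginv x)) (Matrix.of (U x)) (Matrix.of (sU x))
      (Matrix.of (g x)) (dφ x) (dψ x) (δU x) (δsU x) hA hB hC hGm
    constructor
    · rintro ⟨h1, h2⟩
      have h := S.mp ⟨fun b => (h1 b).trans
          (congrArg₂ (· + ·) (pair4 _ _ _ b) (pair4 _ _ _ b)),
        fun b => (h2 b).trans
          (congrArg₂ (· - ·) (pair4 _ _ _ b) (pair4 _ _ _ b))⟩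
      exact ⟨fun b => (h.1 b).trans
          (congrArg₂ (· - ·) (pair4 _ _ _ b).symm (pair4 _ _ _ b).symm),
        fun b => (h.2 b).trans
          (congrArg₂ (· - ·) (congrArg Neg.neg (pair4 _ _ _ b).symm) (pair4 _ _ _ b).symm)⟩
    · rintro ⟨h1, h2⟩
      have h := S.mpr ⟨fun b => (h1 b).trans
          (congrArg₂ (· - ·) (pair4 _ _ _ b) (pair4 _ _ _ b)),
        fun b => (h2 b).trans
          (congrArg₂ (· - ·) (congrArg Neg.neg (pair4 _ _ _ b)) (pair4 _ _ _ b))⟩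
      exact ⟨fun b => (h.1 b).trans
          (congrArg₂ (· + ·) (pair4 _ _ _ b).symm (pair4 _ _ _ b).symm),
        fun b => (h.2 b).trans
          (congrArg₂ (· - ·) (pair4 _ _ _ b).symm (pair4 _ _ _ b).symm)⟩
  constructor
  · rintro ⟨hMF, hMsF⟩
    have h := fun x => (main x).mp ((maxeq x).mp ⟨fun b => hMF x b, fun b => hMsF x b⟩)
    exact ⟨fun x b => (h x).1 b, fun x b => (h x).2 b⟩
  · rintro ⟨hφ, hψ⟩
    have h := fun x => (maxeq x).mpr ((main x).mpr ⟨fun b => hφ x b, fun b => hψ x b⟩)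
    exact ⟨fun x b => (h x).1 b, fun x b => (h x).2 b⟩
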